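/- Let G be a finite simple graph, let d ≥ 1 and t ≥ 1 be integers, and let H(G,d,t) be the associated constructed hypergraph. Then every minimal hitting set F of H(G,d,t) satisfies |F| ≤ t·C(α(G),d) + |V(G)|, where α(G) is the maximum size of an independent set of G and C(α(G),d) denotes the binomial coefficient. -/
import Mathlib


/-- `F` is a hitting set of the hypergraph with hyperedge family `E'`:
it intersects every hyperedge. -/
def HittingSet {W : Type*} (E' : Set (Set W)) (F : Set W) : Prop :=
  ∀ e ∈ E', (F ∩ e).Nonempty

/-- `F` is a minimal hitting set: it is a hitting set and no proper subset of it is. -/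
def MinimalHittingSet {W : Type*} (E' : Set (Set W)) (F : Set W) : Prop :=
  HittingSet E' F ∧ ∀ F' : Set W, F' ⊂ F → ¬ HittingSet E' F'

/-- `I` is an independent set of `G` (as a `Finset`): no two of its vertices are adjacent. -/
def FinIndep {V : Type*} (G : SimpleGraph V) (I : Finset V) : Prop :=
  ∀ u ∈ I, ∀ v ∈ I, ¬ G.Adj u v

/-- The vertex set of the hypergraph `H(G,d,t)`: the vertices of `G` together with the
pairs `(S, a)` where `S ⊆ V(G)` has `|S| = d` and `1 ≤ a ≤ t`. -/
abbrev HVert (V : Type*) (d t : ℕ) : Type _ :=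
  V ⊕ ({S : Finset V // S.card = d} × Fin t)

/-- The hyperedges of `H(G,d,t)`: the set `{u, v}` for every edge `uv` of `G`, and the
set `S ∪ {(S, a)}` for every `d`-element subset `S` of `V(G)` and every `1 ≤ a ≤ t`. -/
def hEdges {V : Type*} (G : SimpleGraph V) (d t : ℕ) : Set (Set (HVert V d t)) :=
  {e | (∃ u v : V, G.Adj u v ∧ e = {Sum.inl u, Sum.inl v}) ∨
       (∃ (S : {S : Finset V // S.card = d}) (a : Fin t),
          e = Sum.inl '' (↑S.1 : Set V) ∪ {Sum.inr (S, a)})}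

theorem stmt14 {V : Type*} [Fintype V] [DecidableEq V] (G : SimpleGraph V)
    (d t : ℕ) (hd : 1 ≤ d) (ht : 1 ≤ t)
    (α : ℕ) (hα₁ : ∃ I : Finset V, FinIndep G I ∧ I.card = α)
    (hα₂ : ∀ I : Finset V, FinIndep G I → I.card ≤ α)
    (F : Set (HVert V d t)) (hF : MinimalHittingSet (hEdges G d t) F) :
    F.ncard ≤ t * α.choose d + Fintype.card V := by
  classical
  obtain ⟨hHit, hMin⟩ := hF
  set A : Set V := Sum.inl ⁻¹' F with hA
  set B : Set ({S : Finset V // S.card = d} × Fin t) := Sum.inr ⁻¹' F with hB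
  set J : Finset V := Finset.univ.filter (fun v => Sum.inl v ∉ F) with hJ
  have hJmem : ∀ v, v ∈ J ↔ Sum.inl v ∉ F := by
    intro v; simp [hJ]
  have hJindep : FinIndep G J := by
    intro u hu v hv hadj
    have he : ({Sum.inl u, Sum.inl v} : Set (HVert V d t)) ∈ hEdges G d t :=
      Or.inl ⟨u, v, hadj, rfl⟩
    obtain ⟨x, hxF, hxe⟩ := hHit _ he
    simp only [Set.mem_insert_iff, Set.mem_singleton_iff] at hxe
    rcases hxe with rfl | rfl
    · exact (hJmem u).1 hu hxF
    · exact (hJmem v).1 hv hxF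
  have hJcard : J.card ≤ α := hα₂ J hJindep
  have hSsub : ∀ p, p ∈ B → ↑p.1.1 ⊆ J := by
    intro p hp v hv
    rw [hJmem]
    intro hvF
    have hpF : Sum.inr p ∈ F := hp
    apply hMin (F \ {Sum.inr p})
    · exact ⟨Set.diff_subset, fun hsub => (hsub hpF).2 rfl⟩
    · intro e he
      rcases he with ⟨u, w, hadj, rfl⟩ | ⟨S', a', rfl⟩
      · obtain ⟨x, hxF, hxe⟩ := hHit _ (Or.inl ⟨u, w, hadj, rfl⟩)
        refine ⟨x, ⟨hxF, ?_⟩, hxe⟩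
        simp only [Set.mem_insert_iff, Set.mem_singleton_iff] at hxe
        rcases hxe with rfl | rfl <;> simp
      · by_cases hpq : (S', a') = p
        · subst hpq
          refine ⟨Sum.inl v, ⟨hvF, by simp⟩, Or.inl ⟨v, hv, rfl⟩⟩
        · obtain ⟨x, hxF, hxe⟩ := hHit _ (Or.inr ⟨S', a', rfl⟩)
          refine ⟨x, ⟨hxF, ?_⟩, hxe⟩
          rcases hxe with ⟨w, hw, rfl⟩ | hx
          · simp
          · simp only [Set.mem_singleton_iff] at hx
            subst hx
            simp [hpq]
  have hFsub : F ⊆ Sum.inl '' A ∪ Sum.inr '' B := by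
    intro x hx
    cases x with
    | inl v => exact Or.inl ⟨v, hx, rfl⟩
    | inr p => exact Or.inr ⟨p, hx, rfl⟩
  have h1 : F.ncard ≤ (Sum.inl '' A).ncard + (Sum.inr '' B).ncard :=
    le_trans (Set.ncard_le_ncard hFsub (Set.toFinite _)) (Set.ncard_union_le _ _)
  rw [Set.ncard_image_of_injective _ Sum.inl_injective,
      Set.ncard_image_of_injective _ Sum.inr_injective] at h1
  have hAcard : A.ncard ≤ Fintype.card V := by
    have := Set.ncard_le_ncard (Set.subset_univ A) (Set.toFinite _)
    simpa [Set.ncard_univ] using this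
  have hBcard : B.ncard ≤ t * α.choose d := by
    have hinj : Function.Injective
        (fun p : ({S : Finset V // S.card = d} × Fin t) => (p.1.1, p.2)) := by
      intro p q h
      simp only [Prod.mk.injEq] at h
      exact Prod.ext (Subtype.ext h.1) h.2
    have himg : (fun p : ({S : Finset V // S.card = d} × Fin t) => (p.1.1, p.2)) '' B
        ⊆ ↑(J.powersetCard d ×ˢ (Finset.univ : Finset (Fin t))) := by
      rintro q ⟨p, hp, rfl⟩
      simp only [Finset.coe_product, Set.mem_prod, Finset.mem_coe,
        Finset.mem_powersetCard, Finset.mem_univ, and_true]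
      exact ⟨fun x hx => hSsub p hp hx, p.1.2⟩
    calc B.ncard = _ := (Set.ncard_image_of_injective B hinj).symm
      _ ≤ (↑(J.powersetCard d ×ˢ (Finset.univ : Finset (Fin t))) :
            Set (Finset V × Fin t)).ncard := Set.ncard_le_ncard himg (Set.toFinite _)
      _ = (J.powersetCard d ×ˢ (Finset.univ : Finset (Fin t))).card :=
            Set.ncard_coe_finset _
      _ = J.card.choose d * t := by simp [Finset.card_powersetCard]
      _ ≤ α.choose d * t := Nat.mul_le_mul_right _ (Nat.choose_le_choose d hJcard)
      _ = t * α.choose d := Nat.mul_comm _ _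
  omega
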